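/- Row-sum bounds for the spectral radius of the memory operator: min_{s∈S} Σ_{t∈S} m(s,t) ≤ 𝐫 ≤ max_{s∈S} Σ_{t∈S} m(s,t). -/

import Mathlib

open Filter Topology

/-- Concatenation of a type `t` with a memory sequence `x`. -/
def memCons {S : Type*} (t : S) (x : ℕ → S) : ℕ → S
  | 0 => t
  | n + 1 => x n

/-- **Row-sum bounds for the spectral radius of the memory operator.**
`min_s Σ_t m(s,t) ≤ R ≤ max_s Σ_t m(s,t)`, where `R` is the spectral radius of the
memory operator `𝐦` acting on `C(𝒮, ℝ)` (given by Gelfand's formula). -/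
theorem row_sum_bounds_memory_spectral_radius
    {S : Type*} [Fintype S] [Nonempty S] [DecidableEq S]
    [TopologicalSpace S] [DiscreteTopology S]
    (m : S → S → ℝ)
    (hm_nonneg : ∀ s t, 0 ≤ m s t)
    (hm_prim : ∃ k : ℕ, 1 ≤ k ∧ ∀ s t, 0 < ((Matrix.of m) ^ k) s t)
    (τ : ℕ → ℝ)
    (hτ_nonneg : ∀ j, 0 ≤ τ j) (hτ_sum : HasSum τ 1)
    (hτ_zero : 0 < τ 0)
    (hτ_mean : Summable fun j : ℕ => (j : ℝ) * τ j)
    (T : C(ℕ → S, ℝ) →L[ℝ] C(ℕ → S, ℝ))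
    (hT : ∀ (f : C(ℕ → S, ℝ)) (x : ℕ → S),
      T f x = ∑' j : ℕ, τ j * ∑ t : S, m (x j) t * f (memCons t x))
    (R : ℝ)
    (hR : Tendsto (fun k : ℕ => ‖T ^ k‖ ^ ((1 : ℝ) / k)) atTop (𝓝 R)) :
    Finset.univ.inf' Finset.univ_nonempty (fun s => ∑ t : S, m s t) ≤ R ∧
    R ≤ Finset.univ.sup' Finset.univ_nonempty (fun s => ∑ t : S, m s t) := by
  set M := Finset.univ.sup' Finset.univ_nonempty (fun s => ∑ t : S, m s t) with hMdef
  set μ := Finset.univ.inf' Finset.univ_nonempty (fun s => ∑ t : S, m s t) with hμdef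
  have hrow_nonneg : ∀ s : S, 0 ≤ ∑ t : S, m s t :=
    fun s => Finset.sum_nonneg fun t _ => hm_nonneg s t
  have hrowM : ∀ s : S, ∑ t : S, m s t ≤ M :=
    fun s => by rw [hMdef]; exact Finset.le_sup' (fun s => ∑ t : S, m s t) (Finset.mem_univ s)
  have hμrow : ∀ s : S, μ ≤ ∑ t : S, m s t :=
    fun s => by rw [hμdef]; exact Finset.inf'_le _ (Finset.mem_univ s)
  have hμ0 : 0 ≤ μ := by rw [hμdef]; exact Finset.le_inf' _ _ fun s _ => hrow_nonneg s
  have hM0 : 0 ≤ M := (hrow_nonneg (Classical.arbitrary S)).trans (hrowM _)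
  have hτsummable : Summable τ := hτ_sum.summable
  -- summability of the defining series
  have hbound : ∀ (f : C(ℕ → S, ℝ)) (x : ℕ → S) (j : ℕ),
      ‖τ j * ∑ t : S, m (x j) t * f (memCons t x)‖ ≤ τ j * (M * ‖f‖) := by
    intro f x j
    rw [norm_mul, Real.norm_of_nonneg (hτ_nonneg j)]
    refine mul_le_mul_of_nonneg_left ?_ (hτ_nonneg j)
    calc ‖∑ t : S, m (x j) t * f (memCons t x)‖
        ≤ ∑ t : S, ‖m (x j) t * f (memCons t x)‖ := norm_sum_le _ _
      _ ≤ ∑ t : S, m (x j) t * ‖f‖ := by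
          refine Finset.sum_le_sum fun t _ => ?_
          rw [norm_mul, Real.norm_of_nonneg (hm_nonneg _ _)]
          exact mul_le_mul_of_nonneg_left (f.norm_coe_le_norm _) (hm_nonneg _ _)
      _ = (∑ t : S, m (x j) t) * ‖f‖ := by rw [Finset.sum_mul]
      _ ≤ M * ‖f‖ := mul_le_mul_of_nonneg_right (hrowM _) (norm_nonneg f)
  have hsummable : ∀ (f : C(ℕ → S, ℝ)) (x : ℕ → S),
      Summable (fun j : ℕ => τ j * ∑ t : S, m (x j) t * f (memCons t x)) := by
    intro f x
    exact Summable.of_norm_bounded (hτsummable.mul_right (M * ‖f‖)) (hbound f x)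
  -- operator norm bound: ‖T f‖ ≤ M * ‖f‖
  have hTnorm : ‖T‖ ≤ M := by
    refine ContinuousLinearMap.opNorm_le_bound T hM0 fun f => ?_
    rw [ContinuousMap.norm_le _ (by positivity)]
    intro x
    rw [hT]
    calc ‖∑' j : ℕ, τ j * ∑ t : S, m (x j) t * f (memCons t x)‖
        ≤ ∑' j : ℕ, ‖τ j * ∑ t : S, m (x j) t * f (memCons t x)‖ :=
          norm_tsum_le_tsum_norm ((hsummable f x).abs)
      _ ≤ ∑' j : ℕ, τ j * (M * ‖f‖) := by
          refine Summable.tsum_le_tsum (hbound f x) ((hsummable f x).abs) (hτsummable.mul_right _)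
      _ = M * ‖f‖ := by rw [tsum_mul_right, hτ_sum.tsum_eq, one_mul]
  -- lower bound by iterating on the constant function 1
  have hstep : ∀ (g : C(ℕ → S, ℝ)) (c : ℝ), 0 ≤ c → (∀ y, c ≤ g y) →
      ∀ x, μ * c ≤ T g x := by
    intro g c hc hg x
    rw [hT]
    have h1 : ∀ j : ℕ, τ j * (μ * c) ≤ τ j * ∑ t : S, m (x j) t * g (memCons t x) := by
      intro j
      refine mul_le_mul_of_nonneg_left ?_ (hτ_nonneg j)
      calc μ * c ≤ (∑ t : S, m (x j) t) * c :=
            mul_le_mul_of_nonneg_right (hμrow _) hc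
        _ = ∑ t : S, m (x j) t * c := Finset.sum_mul _ _ _
        _ ≤ ∑ t : S, m (x j) t * g (memCons t x) :=
            Finset.sum_le_sum fun t _ => mul_le_mul_of_nonneg_left (hg _) (hm_nonneg _ _)
    calc μ * c = ∑' j : ℕ, τ j * (μ * c) := by
          rw [tsum_mul_right, hτ_sum.tsum_eq, one_mul]
      _ ≤ ∑' j : ℕ, τ j * ∑ t : S, m (x j) t * g (memCons t x) :=
          Summable.tsum_le_tsum h1 (hτsummable.mul_right _) (hsummable g x)
  have hlow : ∀ (k : ℕ) (x : ℕ → S), μ ^ k ≤ ((T ^ k) 1) x := by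
    intro k
    induction k with
    | zero => intro x; simp
    | succ k ih =>
        intro x
        have hpow : (T ^ (k + 1)) (1 : C(ℕ → S, ℝ)) = T ((T ^ k) 1) := by
          rw [pow_succ']; rfl
        rw [hpow, pow_succ]
        have := hstep ((T ^ k) 1) (μ ^ k) (pow_nonneg hμ0 k) ih x
        linarith [this]
  -- norm bounds for T^k
  have hnorm_up : ∀ k : ℕ, 1 ≤ k → ‖T ^ k‖ ≤ M ^ k := by
    intro k hk
    calc ‖T ^ k‖ ≤ ‖T‖ ^ k := norm_pow_le' T (Nat.lt_of_lt_of_le Nat.zero_lt_one hk)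
      _ ≤ M ^ k := pow_le_pow_left₀ (norm_nonneg T) hTnorm k
  have hnorm_lo : ∀ k : ℕ, μ ^ k ≤ ‖T ^ k‖ := by
    intro k
    obtain ⟨x⟩ : Nonempty (ℕ → S) := ⟨fun _ => Classical.arbitrary S⟩
    have h1 : μ ^ k ≤ ‖(T ^ k) (1 : C(ℕ → S, ℝ))‖ :=
      (hlow k x).trans ((le_abs_self _).trans (ContinuousMap.norm_coe_le_norm ((T ^ k) (1 : C(ℕ → S, ℝ))) x))
    have h2 : ‖(T ^ k) (1 : C(ℕ → S, ℝ))‖ ≤ ‖T ^ k‖ * ‖(1 : C(ℕ → S, ℝ))‖ :=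
      (T ^ k).le_opNorm 1
    have h3 : ‖(1 : C(ℕ → S, ℝ))‖ ≤ 1 := by
      rw [ContinuousMap.norm_le _ zero_le_one]
      intro x; simp
    nlinarith [ContinuousLinearMap.opNorm_nonneg (T ^ k)]
  -- pass to roots
  have hroot : ∀ k : ℕ, 1 ≤ k → μ ≤ ‖T ^ k‖ ^ ((1 : ℝ) / k) ∧
      ‖T ^ k‖ ^ ((1 : ℝ) / k) ≤ M := by
    intro k hk
    have hk0 : (k : ℝ) ≠ 0 := Nat.cast_ne_zero.mpr (by omega)
    have hkinv : (k : ℝ) * ((1 : ℝ) / k) = 1 := by field_simp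
    have hnn : (0 : ℝ) ≤ ‖T ^ k‖ := ContinuousLinearMap.opNorm_nonneg _
    constructor
    · have := Real.rpow_le_rpow (pow_nonneg hμ0 k) (hnorm_lo k)
        (by positivity : (0:ℝ) ≤ (1 : ℝ) / k)
      calc μ = (μ ^ k) ^ ((1 : ℝ) / k) := by
            rw [← Real.rpow_natCast μ k, ← Real.rpow_mul hμ0, hkinv, Real.rpow_one]
        _ ≤ ‖T ^ k‖ ^ ((1 : ℝ) / k) := this
    · have := Real.rpow_le_rpow hnn (hnorm_up k hk) (by positivity : (0:ℝ) ≤ (1 : ℝ) / k)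
      calc ‖T ^ k‖ ^ ((1 : ℝ) / k) ≤ (M ^ k) ^ ((1 : ℝ) / k) := this
        _ = M := by rw [← Real.rpow_natCast M k, ← Real.rpow_mul hM0, hkinv, Real.rpow_one]
  constructor
  · refine ge_of_tendsto hR ?_
    filter_upwards [eventually_ge_atTop 1] with k hk
    exact (hroot k hk).1
  · refine le_of_tendsto hR ?_
    filter_upwards [eventually_ge_atTop 1] with k hk
    exact (hroot k hk).2
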